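/- Let n ≥ 2 with |n| < 1 and let f(z) = z^n − z over K. Then for every root z of f and every root w of the derivative f'(z) = n z^{n−1} − 1, one has |z − w| = |n|^{-1/(n-1)} > 1. In particular, no closed unit disk centered at a root of f contains a root of f'. -/
import Mathlib

/-- For `n ≥ 2` with `|n| < 1`, the polynomial `f(z) = z^n - z` is a counterexample to the
direct analogue of Sendov's conjecture: every root `z` of `f` and every root `w` of `f'`
satisfy `|z - w| = |n|^{-1/(n-1)} > 1`. -/
theorem counterexample_pow_sub_X {K : Type*} [Field K] [IsAlgClosed K] [CharZero K]
    (v : AbsoluteValue K ℝ) (hna : IsNonarchimedean v)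
    (n : ℕ) (hn : 2 ≤ n) (hsmall : v ((n : K)) < 1) :
    (∀ z : K, (Polynomial.X ^ n - Polynomial.X : Polynomial K).IsRoot z →
      ∀ w : K, (Polynomial.derivative (Polynomial.X ^ n - Polynomial.X : Polynomial K)).IsRoot w →
        v (z - w) = v ((n : K)) ^ (-(1 / ((n : ℝ) - 1)))) ∧
    1 < v ((n : K)) ^ (-(1 / ((n : ℝ) - 1))) := by
  have hnK : (n : K) ≠ 0 := Nat.cast_ne_zero.mpr (by omega)
  set A := v ((n : K)) with hA
  have hA0 : 0 < A := v.pos hnK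
  have hnR : (1:ℝ) < (n:ℝ) := by exact_mod_cast Nat.lt_of_lt_of_le one_lt_two hn
  have hexp : (0:ℝ) < 1 / ((n:ℝ) - 1) := div_pos one_pos (by linarith)
  have hgt1 : 1 < A ^ (-(1 / ((n : ℝ) - 1))) := by
    rw [Real.one_lt_rpow_iff_of_pos hA0]
    right
    exact ⟨hsmall, by linarith⟩
  refine ⟨fun z hz w hw => ?_, hgt1⟩
  -- root facts
  have hz' : z ^ n = z := by
    have := hz
    simp [Polynomial.IsRoot, sub_eq_zero] at this
    exact this
  have hw' : (n : K) * w ^ (n - 1) = 1 := by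
    have := hw
    simp [Polynomial.IsRoot, Polynomial.derivative_sub, Polynomial.derivative_X_pow,
      sub_eq_zero] at this
    simpa using this
  -- |z| ≤ 1
  have hzle : v z ≤ 1 := by
    by_contra h
    push_neg at h
    have h1 : v z < v z ^ n := lt_self_pow₀ h (by omega)
    rw [← v.map_pow, hz'] at h1
    exact lt_irrefl _ h1
  -- |w| = A ^ (-(1/(n-1)))
  have hwpow : v w ^ (n - 1) = A⁻¹ := by
    have h1 : A * v w ^ (n - 1) = 1 := by
      rw [hA, ← v.map_pow, ← v.map_mul, hw', v.map_one]
    field_simp at h1 ⊢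
    linarith [h1]
  have hvw : v w = A ^ (-(1 / ((n : ℝ) - 1))) := by
    have hn1 : ((n - 1 : ℕ) : ℝ) = (n : ℝ) - 1 := by
      push_cast [Nat.cast_sub (by omega : 1 ≤ n)]; ring
    have hne : (n:ℝ) - 1 ≠ 0 := by linarith
    have h2 : (v w : ℝ) ^ ((n:ℝ) - 1) = A⁻¹ := by
      rw [← hn1, Real.rpow_natCast, hwpow]
    calc v w = ((v w) ^ ((n:ℝ) - 1)) ^ (((n:ℝ) - 1)⁻¹) := by
          rw [← Real.rpow_mul (v.nonneg w), mul_inv_cancel₀ hne, Real.rpow_one]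
      _ = (A⁻¹) ^ (((n:ℝ) - 1)⁻¹) := by rw [h2]
      _ = A ^ (-(1 / ((n : ℝ) - 1))) := by
          rw [one_div, Real.rpow_neg hA0.le, ← Real.inv_rpow hA0.le]
  have hwgt : 1 < v w := hvw ▸ hgt1
  have hzw : v z < v w := lt_of_le_of_lt hzle hwgt
  -- ultrametric: v (z - w) = v w
  have hle : v (z - w) ≤ v w := by
    have := hna z (-w)
    simp only [v.map_neg] at this
    rw [← sub_eq_add_neg] at this
    exact this.trans (max_le hzw.le le_rfl)
  have hge : v w ≤ v (z - w) := by
    by_contra h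
    push_neg at h
    have h2 : v w ≤ max (v (z - w)) (v z) := by
      have := hna (z - w) (-z)
      simp only [v.map_neg] at this
      have heq : z - w + -z = -w := by ring
      rw [heq, v.map_neg] at this
      exact this
    have : v w < v w := lt_of_le_of_lt h2 (max_lt h hzw)
    exact lt_irrefl _ this
  rw [le_antisymm hle hge, hvw]
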